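/- Let R be a CI-ring with identity and e an idempotent element of R (e² = e). Then the corner ring eRe is a CI-ring. -/

import Mathlib

open Pointwise

/-- The product of two two-sided ideals: the two-sided ideal generated by pointwise products. -/
def tmul {R : Type*} [Ring R] (A B : TwoSidedIdeal R) : TwoSidedIdeal R :=
  TwoSidedIdeal.span ((A : Set R) * (B : Set R))

/-- A CI-ring is a ring in which any two two-sided ideals commute. -/
def IsCIRing (R : Type*) [Ring R] : Prop :=
  ∀ A B : TwoSidedIdeal R, tmul A B = tmul B A
/-- The corner set eRe = {x | e*x = x ∧ x*e = x}, as a non-unital subring. -/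
def corner {R : Type*} [Ring R] (e : R) : NonUnitalSubring R where
  carrier := {x | e * x = x ∧ x * e = x}
  add_mem' := by
    rintro a b ⟨ha1, ha2⟩ ⟨hb1, hb2⟩
    exact ⟨by rw [mul_add, ha1, hb1], by rw [add_mul, ha2, hb2]⟩
  zero_mem' := ⟨mul_zero e, zero_mul e⟩
  neg_mem' := by
    rintro a ⟨ha1, ha2⟩
    exact ⟨by rw [mul_neg, ha1], by rw [neg_mul, ha2]⟩
  mul_mem' := by
    rintro a b ⟨ha1, ha2⟩ ⟨hb1, hb2⟩
    exact ⟨by rw [← mul_assoc, ha1], by rw [mul_assoc, hb2]⟩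

/-- For an idempotent e, the corner ring eRe is a ring with identity e. -/
def cornerRing {R : Type*} [Ring R] (e : R) (he : e * e = e) : Ring (corner e) :=
  { (inferInstance : NonUnitalRing (corner e)) with
    one := ⟨e, he, he⟩
    one_mul := fun x => Subtype.ext x.2.1
    mul_one := fun x => Subtype.ext x.2.2 }

/-- The two-sided ideal given additively by the closure of `{r*m*s | m ∈ S}`. -/
def genIdeal {R : Type*} [Ring R] (S : Set R) : TwoSidedIdeal R :=
  TwoSidedIdeal.mk' (AddSubgroup.closure {x | ∃ r m s, m ∈ S ∧ x = r * m * s})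
    (AddSubgroup.zero_mem _)
    (fun h1 h2 => AddSubgroup.add_mem _ h1 h2)
    (fun h => AddSubgroup.neg_mem _ h)
    (fun {x y} h => by
      refine AddSubgroup.closure_induction ?_ ?_ ?_ ?_ h
      · rintro z ⟨r, m, s, hm, rfl⟩
        exact AddSubgroup.subset_closure ⟨x * r, m, s, hm, by rw [mul_assoc, mul_assoc, mul_assoc]⟩
      · simpa using AddSubgroup.zero_mem _
      · intro a b _ _ ha hb
        simpa [mul_add] using AddSubgroup.add_mem _ ha hb
      · intro a _ ha
        simpa [mul_neg] using AddSubgroup.neg_mem _ ha)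
    (fun {x y} h => by
      refine AddSubgroup.closure_induction ?_ ?_ ?_ ?_ h
      · rintro z ⟨r, m, s, hm, rfl⟩
        exact AddSubgroup.subset_closure ⟨r, m, s * y, hm, by rw [← mul_assoc]⟩
      · simpa using AddSubgroup.zero_mem _
      · intro a b _ _ ha hb
        simpa [add_mul] using AddSubgroup.add_mem _ ha hb
      · intro a _ ha
        simpa [neg_mul] using AddSubgroup.neg_mem _ ha)

lemma mem_genIdeal_iff {R : Type*} [Ring R] (S : Set R) (x : R) :
    x ∈ genIdeal S ↔ x ∈ AddSubgroup.closure {x : R | ∃ r m s, m ∈ S ∧ x = r * m * s} :=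
  TwoSidedIdeal.mem_mk' _ _ _ _ _ _ _

lemma span_le_genIdeal {R : Type*} [Ring R] (S : Set R) :
    ∀ x ∈ TwoSidedIdeal.span S, x ∈ genIdeal S := by
  intro x hx
  exact TwoSidedIdeal.mem_span_iff.mp hx _ (fun m hm =>
    (mem_genIdeal_iff S m).mpr (AddSubgroup.subset_closure ⟨1, m, 1, hm, by rw [one_mul, mul_one]⟩))

/-- Multiplying a member of one generated ideal by a member of another lands in `J`,
provided all products of generators do. -/
lemma genIdeal_mul_mem {R : Type*} [Ring R] {T1 T2 : Set R} {J : TwoSidedIdeal R}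
    (h : ∀ r m s r' m' s', m ∈ T1 → m' ∈ T2 → (r * m * s) * (r' * m' * s') ∈ J)
    {u v : R} (hu : u ∈ genIdeal T1) (hv : v ∈ genIdeal T2) : u * v ∈ J := by
  rw [mem_genIdeal_iff] at hu hv
  refine AddSubgroup.closure_induction (p := fun u _ => u * v ∈ J) ?_ ?_ ?_ ?_ hu
  · rintro z ⟨r, m, s, hm, rfl⟩
    refine AddSubgroup.closure_induction (p := fun v _ => (r * m * s) * v ∈ J) ?_ ?_ ?_ ?_ hv
    · rintro w ⟨r', m', s', hm', rfl⟩
      exact h r m s r' m' s' hm hm'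
    · simpa [mul_zero] using J.zero_mem
    · intro a b _ _ ha hb
      simpa [mul_add] using J.add_mem ha hb
    · intro a _ ha
      simpa [mul_neg] using J.neg_mem ha
  · simpa [zero_mul] using J.zero_mem
  · intro a b _ _ ha hb
    simpa [add_mul] using J.add_mem ha hb
  · intro a _ ha
    simpa [neg_mul] using J.neg_mem ha

/-- A corner element that lies in the ideal of `R` generated by the image of `S0 ⊆ J`
already lies in `J`. -/
lemma corner_mem_of_genIdeal {R : Type*} [Ring R] {e : R} (he : e * e = e)
    {S0 : Set (corner e)} {J : TwoSidedIdeal (corner e)} (hS0 : S0 ⊆ (J : Set (corner e)))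
    (x : corner e) (hx : (x : R) ∈ genIdeal (Subtype.val '' S0)) : x ∈ J := by
  rw [mem_genIdeal_iff] at hx
  have main : ∀ y ∈ AddSubgroup.closure
      {x : R | ∃ r m s, m ∈ Subtype.val '' S0 ∧ x = r * m * s},
      ∃ j ∈ J, (j : R) = e * y * e := by
    intro y hy
    refine AddSubgroup.closure_induction ?_ ?_ ?_ ?_ hy
    · rintro z ⟨r, m, s, ⟨m0, hm0, rfl⟩, rfl⟩
      have hcl : e * (e * r * e) = e * r * e ∧ (e * r * e) * e = e * r * e :=
        ⟨by rw [← mul_assoc, ← mul_assoc, he], by rw [mul_assoc, he]⟩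
      have hcr : e * (e * s * e) = e * s * e ∧ (e * s * e) * e = e * s * e :=
        ⟨by rw [← mul_assoc, ← mul_assoc, he], by rw [mul_assoc, he]⟩
      set cl : corner e := ⟨e * r * e, hcl⟩
      set cr : corner e := ⟨e * s * e, hcr⟩
      refine ⟨cl * m0 * cr, J.mul_mem_right _ _ (J.mul_mem_left _ _ (hS0 hm0)), ?_⟩
      have h1 : e * (m0 : R) = (m0 : R) := m0.2.1
      have h2 : (m0 : R) * e = (m0 : R) := m0.2.2
      show (e * r * e) * (m0 : R) * (e * s * e) = e * (r * (m0 : R) * s) * e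
      rw [show (e * r * e) * (m0 : R) * (e * s * e) =
        (e * r) * ((e * (m0 : R)) * e) * (s * e) by noncomm_ring, h1, h2]
      noncomm_ring
    · exact ⟨0, J.zero_mem, by simp⟩
    · rintro a b _ _ ⟨j1, hj1, hj1e⟩ ⟨j2, hj2, hj2e⟩
      exact ⟨j1 + j2, J.add_mem hj1 hj2, by
        push_cast [hj1e, hj2e]; rw [mul_add, add_mul]⟩
    · rintro a _ ⟨j1, hj1, hj1e⟩
      exact ⟨-j1, J.neg_mem hj1, by push_cast [hj1e]; rw [mul_neg, neg_mul]⟩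
  obtain ⟨j, hj, hje⟩ := main _ hx
  have : (j : R) = (x : R) := by rw [hje, x.2.1, x.2.2]
  rwa [Subtype.coe_injective this] at hj

/-- If R is a CI-ring and e an idempotent, then the corner ring eRe is a CI-ring. -/
theorem ci_corner {R : Type*} [Ring R] (hR : IsCIRing R) (e : R) (he : e * e = e) :
    @IsCIRing (corner e) (cornerRing e he) := by
  letI : Ring (corner e) := cornerRing e he
  have key : ∀ A B : TwoSidedIdeal (corner e), ∀ x, x ∈ tmul A B → x ∈ tmul B A := by
    intro A B x hx
    set vA : Set R := Subtype.val '' (A : Set (corner e)) with hvA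
    set vB : Set R := Subtype.val '' (B : Set (corner e)) with hvB
    set EA := TwoSidedIdeal.span vA
    set EB := TwoSidedIdeal.span vB
    -- contraction of tmul EA EB to the corner
    have hcoe : ∀ a b : corner e, ((a * b : corner e) : R) = (a : R) * (b : R) := fun _ _ => rfl
    set C : TwoSidedIdeal (corner e) := TwoSidedIdeal.mk'
      {y : corner e | (y : R) ∈ tmul EA EB}
      (by simp only [Set.mem_setOf_eq, ZeroMemClass.coe_zero]
          exact (tmul EA EB).zero_mem)
      (fun {a b} ha hb => by
        simp only [Set.mem_setOf_eq] at ha hb ⊢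
        push_cast
        exact (tmul EA EB).add_mem ha hb)
      (fun {a} ha => by
        simp only [Set.mem_setOf_eq] at ha ⊢
        push_cast
        exact (tmul EA EB).neg_mem ha)
      (fun {a b} hb => by
        simp only [Set.mem_setOf_eq] at hb ⊢
        rw [hcoe]
        exact (tmul EA EB).mul_mem_left _ _ hb)
      (fun {a b} ha => by
        simp only [Set.mem_setOf_eq] at ha ⊢
        rw [hcoe]
        exact (tmul EA EB).mul_mem_right _ _ ha) with hC
    have hxC : x ∈ C := by
      refine TwoSidedIdeal.mem_span_iff.mp hx C ?_
      rintro z hz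
      obtain ⟨a, ha, b, hb, rfl⟩ := hz
      rw [hC, SetLike.mem_coe, TwoSidedIdeal.mem_mk']
      show ((a * b : corner e) : R) ∈ tmul EA EB
      rw [hcoe]
      exact TwoSidedIdeal.subset_span
        (Set.mul_mem_mul (TwoSidedIdeal.subset_span ⟨a, ha, rfl⟩)
          (TwoSidedIdeal.subset_span ⟨b, hb, rfl⟩))
    have hxR : (x : R) ∈ tmul EB EA := by
      have h' := (TwoSidedIdeal.mem_mk' _ _ _ _ _ _ _).mp hxC
      rw [hR EB EA]
      exact h'
    -- push into genIdeal of the image of (B * A)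
    set S : Set R := Subtype.val '' ((B : Set (corner e)) * (A : Set (corner e))) with hS
    have hgen : (x : R) ∈ genIdeal S := by
      refine TwoSidedIdeal.mem_span_iff.mp hxR (genIdeal S) ?_
      rintro z ⟨u, hu, v, hv, rfl⟩
      have hu' : u ∈ genIdeal vB := span_le_genIdeal vB u hu
      have hv' : v ∈ genIdeal vA := span_le_genIdeal vA v hv
      refine genIdeal_mul_mem ?_ hu' hv'
      rintro r m s r' m' s' ⟨b, hb, rfl⟩ ⟨a, ha, rfl⟩
      have hcm : e * (e * (s * r') * e) = e * (s * r') * e ∧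
          (e * (s * r') * e) * e = e * (s * r') * e :=
        ⟨by rw [← mul_assoc, ← mul_assoc, he], by rw [mul_assoc, he]⟩
      set c : corner e := ⟨e * (s * r') * e, hcm⟩ with hc
      have h1 : (b : R) * e = (b : R) := b.2.2
      have h2 : e * (a : R) = (a : R) := a.2.1
      have heq : (r * (b : R) * s) * (r' * (a : R) * s') = r * ((b * c * a : corner e) : R) * s' := by
        rw [hcoe, hcoe]
        show _ = r * ((b : R) * (e * (s * r') * e) * (a : R)) * s'
        rw [show (b : R) * (e * (s * r') * e) * (a : R) =
          ((b : R) * e) * (s * r') * (e * (a : R)) by noncomm_ring]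
        rw [h1, h2]
        noncomm_ring
      rw [heq]
      refine (mem_genIdeal_iff S _).mpr (AddSubgroup.subset_closure ⟨r, _, s', ?_, rfl⟩)
      exact ⟨b * c * a, by
        rw [show b * c * a = b * (c * a) from mul_assoc b c a]
        exact Set.mul_mem_mul hb (A.mul_mem_left _ _ ha), rfl⟩
    exact corner_mem_of_genIdeal he
      (fun z hz => TwoSidedIdeal.subset_span hz) x hgen
  intro A B
  exact le_antisymm (key A B) (key B A)
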